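/- arXiv:2506.01356 — 4 statements merged into one kernel-verified Lean document; each statement's English description precedes it below -/
import Mathlib

section
/- Let f : ℝⁿ → ℝⁿ be locally Lipschitz with f(0)=0, let Ω ⊆ ℝⁿ be a compact set with nonempty interior containing 0 whose boundary is C¹, and let V : ℝⁿ → ℝ be continuously differentiable. Fix 0 < c₁ < c₂. Suppose: (i) for all x with c₁ ≤ V(x) ≤ c₂ and x ∈ Ω, ⟪∇V(x), f(x)⟫ < 0; (ii) for all x ∈ ∂Ω with V(x) ≤ c₂, ⟪f(x), n(x)⟫ < 0 where n(x) is the outer unit normal of ∂Ω at x. Then the set {x ∈ Ω : V(x) ≤ c₂} is forward invariant under the flow of ẋ = f(x). -/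
open Set Filter

/-- If `g` has strictly negative derivative at `T`, then `g s < g T` for `s` slightly to
the right of `T`. -/
lemma aux_right_decrease {g : ℝ → ℝ} {T d : ℝ} (hg : HasDerivAt g d T) (hd : d < 0) :
    ∃ ε > 0, ∀ s ∈ Set.Ioc T (T + ε), g s < g T := by
  have h := hasDerivAt_iff_tendsto_slope.mp hg
  have h2 : ∀ᶠ s in nhdsWithin T {T}ᶜ, slope g T s < 0 := h.eventually_lt_const hd
  have h3 : ∀ᶠ s in nhdsWithin T (Set.Ioi T), slope g T s < 0 :=
    h2.filter_mono (nhdsWithin_mono T fun s hs => ne_of_gt hs)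
  rw [eventually_iff, mem_nhdsGT_iff_exists_Ioo_subset] at h3
  obtain ⟨u, hu, hsub⟩ := h3
  have hTu : T < u := hu
  refine ⟨(u - T) / 2, by linarith, ?_⟩
  rintro s ⟨hs1, hs2⟩
  have hsu : s < u := by linarith
  have hslope : slope g T s < 0 := hsub ⟨hs1, hsu⟩
  rw [slope_def_field] at hslope
  have hpos : (0 : ℝ) < s - T := by linarith
  have := mul_neg_of_neg_of_pos hslope hpos
  rw [div_mul_cancel₀ _ (ne_of_gt hpos)] at this
  linarith

/-- Continuity gives preservation of a strict bound on a small closed right interval. -/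
lemma aux_cont_bound {g : ℝ → ℝ} {T c : ℝ} (hg : ContinuousAt g T) (h : g T < c) :
    ∃ ε > 0, ∀ s ∈ Set.Icc T (T + ε), g s < c := by
  have h2 : ∀ᶠ s in nhds T, g s < c := hg.eventually_lt_const h
  rw [Metric.eventually_nhds_iff] at h2
  obtain ⟨δ, hδ, hδ'⟩ := h2
  refine ⟨δ / 2, by linarith, ?_⟩
  rintro s ⟨hs1, hs2⟩
  exact hδ' (by rw [Real.dist_eq, abs_lt]; constructor <;> linarith)

/-- Forward invariance part of Theorem 3.2: if the Lyapunov derivative is negative on the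
band `{x ∈ Ω : c₁ ≤ V x ≤ c₂}` and the vector field points strictly inward on
`∂Ω ∩ {V ≤ c₂}` (where `Ω` is a compact set with nonempty interior, containing `0`,
with C¹ boundary described by a defining function `ρ` whose normalized gradient is the
outer unit normal `nrm`), then `{x ∈ Ω : V x ≤ c₂}` is forward invariant for `ẋ = f(x)`. -/
theorem stmt_1 {n : ℕ} (f : EuclideanSpace ℝ (Fin n) → EuclideanSpace ℝ (Fin n))
    (hf : LocallyLipschitz f) (hf0 : f 0 = 0)
    (Ω : Set (EuclideanSpace ℝ (Fin n))) (hΩc : IsCompact Ω)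
    (hΩint : (interior Ω).Nonempty) (h0Ω : (0 : EuclideanSpace ℝ (Fin n)) ∈ Ω)
    -- C¹ boundary: Ω is the sublevel set of a C¹ defining function ρ with
    -- nonvanishing gradient on the boundary, and `nrm` is the outer unit normal.
    (ρ : EuclideanSpace ℝ (Fin n) → ℝ) (hρ : ContDiff ℝ 1 ρ)
    (hΩρ : Ω = {x | ρ x ≤ 0}) (hbdry : frontier Ω = {x | ρ x = 0})
    (hgradρ : ∀ x ∈ frontier Ω, gradient ρ x ≠ 0)
    (nrm : EuclideanSpace ℝ (Fin n) → EuclideanSpace ℝ (Fin n))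
    (hnrm : ∀ x ∈ frontier Ω, nrm x = ‖gradient ρ x‖⁻¹ • gradient ρ x)
    (V : EuclideanSpace ℝ (Fin n) → ℝ) (hV : ContDiff ℝ 1 V)
    (c₁ c₂ : ℝ) (hc₁ : 0 < c₁) (hc₁₂ : c₁ < c₂)
    -- (i) Lyapunov decrease on the band
    (hband : ∀ x ∈ Ω, c₁ ≤ V x → V x ≤ c₂ → (inner ℝ (gradient V x) (f x) : ℝ) < 0)
    -- (ii) inward-pointing vector field on the boundary
    (hin : ∀ x ∈ frontier Ω, V x ≤ c₂ → (inner ℝ (f x) (nrm x) : ℝ) < 0) :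
    -- conclusion: {x ∈ Ω : V x ≤ c₂} is forward invariant
    ∀ φ : ℝ → EuclideanSpace ℝ (Fin n), (∀ t, HasDerivAt φ (f (φ t)) t) →
      φ 0 ∈ Ω → V (φ 0) ≤ c₂ → ∀ t ≥ 0, φ t ∈ Ω ∧ V (φ t) ≤ c₂ := by
  intro φ hφ h0 hV0 t₀ ht₀
  have hcφ : Continuous φ := continuous_iff_continuousAt.mpr fun t => (hφ t).continuousAt
  have hcρ : Continuous fun t => ρ (φ t) := hρ.continuous.comp hcφ
  have hcV : Continuous fun t => V (φ t) := hV.continuous.comp hcφ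
  -- derivative of ρ ∘ φ
  have hdρ : ∀ t, HasDerivAt (fun s => ρ (φ s))
      ((inner ℝ (gradient ρ (φ t)) (f (φ t)) : ℝ)) t := by
    intro t
    have h1 : HasGradientAt ρ (gradient ρ (φ t)) (φ t) :=
      (hρ.differentiable one_ne_zero (φ t)).hasGradientAt
    have h2 := h1.hasFDerivAt.comp_hasDerivAt t (hφ t)
    exact h2
  have hdV : ∀ t, HasDerivAt (fun s => V (φ s))
      ((inner ℝ (gradient V (φ t)) (f (φ t)) : ℝ)) t := by
    intro t
    have h1 : HasGradientAt V (gradient V (φ t)) (φ t) :=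
      (hV.differentiable one_ne_zero (φ t)).hasGradientAt
    have h2 := h1.hasFDerivAt.comp_hasDerivAt t (hφ t)
    exact h2
  -- local forward invariance at any point of the set
  have hlocal : ∀ T : ℝ, ρ (φ T) ≤ 0 → V (φ T) ≤ c₂ →
      ∃ ε > 0, ∀ s ∈ Set.Icc T (T + ε), ρ (φ s) ≤ 0 ∧ V (φ s) ≤ c₂ := by
    intro T hρT hVT
    -- ρ-part
    have part1 : ∃ ε > 0, ∀ s ∈ Set.Icc T (T + ε), ρ (φ s) ≤ 0 := by
      rcases lt_or_eq_of_le hρT with hlt | heq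
      · obtain ⟨ε, hε, h⟩ := aux_cont_bound (hcρ.continuousAt) hlt
        exact ⟨ε, hε, fun s hs => (h s hs).le⟩
      · have hfr : φ T ∈ frontier Ω := by rw [hbdry]; exact heq
        have hgne : gradient ρ (φ T) ≠ 0 := hgradρ _ hfr
        have hinn : (inner ℝ (f (φ T)) (nrm (φ T)) : ℝ) < 0 := hin _ hfr hVT
        rw [hnrm _ hfr, real_inner_smul_right] at hinn
        have hnormpos : (0 : ℝ) < ‖gradient ρ (φ T)‖⁻¹ :=
          inv_pos.mpr (norm_pos_iff.mpr hgne)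
        have hfd : (inner ℝ (f (φ T)) (gradient ρ (φ T)) : ℝ) < 0 := by
          by_contra h
          push_neg at h
          exact absurd hinn (not_lt.mpr (mul_nonneg hnormpos.le h))
        rw [real_inner_comm] at hfd
        obtain ⟨ε, hε, h⟩ := aux_right_decrease (hdρ T) hfd
        refine ⟨ε, hε, fun s hs => ?_⟩
        rcases eq_or_lt_of_le hs.1 with rfl | hTs
        · exact heq.le
        · have := h s ⟨hTs, hs.2⟩
          linarith
    -- V-part
    have part2 : ∃ ε > 0, ∀ s ∈ Set.Icc T (T + ε), V (φ s) ≤ c₂ := by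
      rcases lt_or_eq_of_le hVT with hlt | heq
      · obtain ⟨ε, hε, h⟩ := aux_cont_bound (hcV.continuousAt) hlt
        exact ⟨ε, hε, fun s hs => (h s hs).le⟩
      · have hmem : φ T ∈ Ω := by rw [hΩρ]; exact hρT
        have hd : (inner ℝ (gradient V (φ T)) (f (φ T)) : ℝ) < 0 :=
          hband _ hmem (by linarith) hVT
        obtain ⟨ε, hε, h⟩ := aux_right_decrease (hdV T) hd
        refine ⟨ε, hε, fun s hs => ?_⟩
        rcases eq_or_lt_of_le hs.1 with rfl | hTs
        · exact hVT
        · have := h s ⟨hTs, hs.2⟩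
          linarith
    obtain ⟨ε₁, hε₁, h1⟩ := part1
    obtain ⟨ε₂, hε₂, h2⟩ := part2
    refine ⟨min ε₁ ε₂, lt_min hε₁ hε₂, fun s hs => ⟨?_, ?_⟩⟩
    · exact h1 s ⟨hs.1, hs.2.trans (by simp [min_le_left])⟩
    · exact h2 s ⟨hs.1, hs.2.trans (by simp [min_le_right])⟩
  -- global statement via sup argument
  have hρ0 : ρ (φ 0) ≤ 0 := by rw [hΩρ] at h0; exact h0
  set P : ℝ → Prop := fun t => ρ (φ t) ≤ 0 ∧ V (φ t) ≤ c₂ with hP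
  have hP0 : P 0 := ⟨hρ0, hV0⟩
  suffices h : P t₀ by
    refine ⟨?_, h.2⟩
    rw [hΩρ]; exact h.1
  set A : Set ℝ := {t | t ∈ Set.Icc 0 t₀ ∧ ∀ s ∈ Set.Icc 0 t, P s} with hA
  have h0A : (0 : ℝ) ∈ A := by
    refine ⟨⟨le_refl 0, ht₀⟩, fun s hs => ?_⟩
    have : s = 0 := le_antisymm hs.2 hs.1
    rw [this]; exact hP0
  have hAne : A.Nonempty := ⟨0, h0A⟩
  have hAbdd : BddAbove A := ⟨t₀, fun t ht => ht.1.2⟩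
  set T := sSup A with hT
  have hT0 : 0 ≤ T := le_csSup hAbdd h0A
  have hTt₀ : T ≤ t₀ := csSup_le hAne fun t ht => ht.1.2
  -- all s in [0, T) satisfy P
  have hPlt : ∀ s, 0 ≤ s → s < T → P s := by
    intro s hs0 hsT
    obtain ⟨t, htA, hst⟩ := exists_lt_of_lt_csSup hAne hsT
    exact htA.2 s ⟨hs0, hst.le⟩
  -- P T holds by closedness
  have hPT : P T := by
    rcases eq_or_lt_of_le hT0 with heq0 | hpos
    · exact heq0 ▸ hP0
    · have hCclosed : IsClosed {s | P s} := by
        have : {s | P s} = (fun t => ρ (φ t)) ⁻¹' (Set.Iic 0) ∩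
            (fun t => V (φ t)) ⁻¹' (Set.Iic c₂) := rfl
        rw [this]
        exact (isClosed_Iic.preimage hcρ).inter (isClosed_Iic.preimage hcV)
      have hsub : Set.Ico 0 T ⊆ {s | P s} := fun s hs => hPlt s hs.1 hs.2
      have hTc : T ∈ closure (Set.Ico 0 T) := by
        rw [closure_Ico (ne_of_lt hpos)]
        exact ⟨hT0, le_refl T⟩
      exact hCclosed.closure_subset ((closure_mono hsub) hTc)
  -- T = t₀
  rcases eq_or_lt_of_le hTt₀ with heqt | hTlt
  · exact heqt ▸ hPT
  · exfalso
    obtain ⟨ε, hε, hloc⟩ := hlocal T hPT.1 hPT.2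
    set T' := min (T + ε) t₀ with hT'
    have hTT' : T < T' := lt_min (by linarith) hTlt
    have hT'A : T' ∈ A := by
      refine ⟨⟨by linarith, min_le_right _ _⟩, fun s hs => ?_⟩
      rcases le_or_gt s T with h | h
      · rcases eq_or_lt_of_le h with rfl | h'
        · exact hPT
        · exact hPlt s hs.1 h'
      · have hsT' : s ≤ T + ε := hs.2.trans (min_le_left _ _)
        exact hloc s ⟨h.le, hsT'⟩
    have : T' ≤ T := le_csSup hAbdd hT'A
    linarith
end

section
/- Under the hypotheses of the previous forward-invariance theorem (Lyapunov decrease in the band {x ∈ Ω : c₁ ≤ V(x) ≤ c₂} and inward-pointing vector field on ∂Ω ∩ V^{≤c₂}, with Ω compact), every trajectory starting in {x ∈ Ω : V(x) ≤ c₂} enters the smaller sublevel set {x ∈ Ω : V(x) ≤ c₁} in finite time: there exists T ≥ 0 with V(φ(T, x₀)) ≤ c₁. -/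
open Filter Set Topology InnerProductSpace

/-- If a real function has a negative derivative at `t`, it is eventually smaller than `g t`
just to the right of `t`. -/
lemma eventually_lt_right_of_hasDerivAt_neg {g : ℝ → ℝ} {t d : ℝ}
    (hg : HasDerivAt g d t) (hd : d < 0) : ∀ᶠ s in 𝓝[>] t, g s < g t := by
  have hslope : Tendsto (slope g t) (𝓝[≠] t) (𝓝 d) :=
    hasDerivAt_iff_tendsto_slope.mp hg
  have hev : ∀ᶠ s in 𝓝[≠] t, slope g t s < 0 :=
    hslope.eventually_lt_const hd
  have hmono : 𝓝[>] t ≤ 𝓝[≠] t :=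
    nhdsWithin_mono t fun s hs => ne_of_gt hs
  filter_upwards [hmono hev, self_mem_nhdsWithin] with s hs hst
  have hst' : (0:ℝ) < s - t := sub_pos.mpr hst
  have hq : (g s - g t) / (s - t) < 0 := by
    simpa [slope_def_field] using hs
  have := (div_neg_iff.mp hq)
  rcases this with ⟨h1, h2⟩ | ⟨h1, h2⟩
  · linarith
  · linarith

/-- Finite-time entry part of Theorem 3.2: if the Lyapunov derivative is negative on the
band `{x ∈ Ω : c₁ ≤ V x ≤ c₂}` and the vector field points strictly inward on
`∂Ω ∩ {V ≤ c₂}` (where `Ω` is a compact set with nonempty interior, containing `0`,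
with C¹ boundary described by a defining function `ρ` whose normalized gradient is the
outer unit normal `nrm`), then `{x ∈ Ω : V x ≤ c₂}` is forward invariant for `ẋ = f(x)`. -/
theorem stmt_2 {n : ℕ} (f : EuclideanSpace ℝ (Fin n) → EuclideanSpace ℝ (Fin n))
    (hf : LocallyLipschitz f) (hf0 : f 0 = 0)
    (Ω : Set (EuclideanSpace ℝ (Fin n))) (hΩc : IsCompact Ω)
    (hΩint : (interior Ω).Nonempty) (h0Ω : (0 : EuclideanSpace ℝ (Fin n)) ∈ Ω)
    -- C¹ boundary: Ω is the sublevel set of a C¹ defining function ρ with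
    -- nonvanishing gradient on the boundary, and `nrm` is the outer unit normal.
    (ρ : EuclideanSpace ℝ (Fin n) → ℝ) (hρ : ContDiff ℝ 1 ρ)
    (hΩρ : Ω = {x | ρ x ≤ 0}) (hbdry : frontier Ω = {x | ρ x = 0})
    (hgradρ : ∀ x ∈ frontier Ω, gradient ρ x ≠ 0)
    (nrm : EuclideanSpace ℝ (Fin n) → EuclideanSpace ℝ (Fin n))
    (hnrm : ∀ x ∈ frontier Ω, nrm x = ‖gradient ρ x‖⁻¹ • gradient ρ x)
    (V : EuclideanSpace ℝ (Fin n) → ℝ) (hV : ContDiff ℝ 1 V)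
    (c₁ c₂ : ℝ) (hc₁ : 0 < c₁) (hc₁₂ : c₁ < c₂)
    -- (i) Lyapunov decrease on the band
    (hband : ∀ x ∈ Ω, c₁ ≤ V x → V x ≤ c₂ → (inner ℝ (gradient V x) (f x) : ℝ) < 0)
    -- (ii) inward-pointing vector field on the boundary
    (hin : ∀ x ∈ frontier Ω, V x ≤ c₂ → (inner ℝ (f x) (nrm x) : ℝ) < 0) :
    -- conclusion: every trajectory starting in {x ∈ Ω : V x ≤ c₂} enters {V ≤ c₁}
    -- in finite time
    ∀ φ : ℝ → EuclideanSpace ℝ (Fin n), (∀ t, HasDerivAt φ (f (φ t)) t) →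
      φ 0 ∈ Ω → V (φ 0) ≤ c₂ → ∃ T ≥ (0:ℝ), V (φ T) ≤ c₁ := by
  intro φ hφ hφ0Ω hφ0V
  have hΩclosed : IsClosed Ω := hΩc.isClosed
  have hfc : Continuous f := hf.continuous
  have hφc : Continuous φ := by
    rw [continuous_iff_continuousAt]
    exact fun t => (hφ t).continuousAt
  -- derivative of V ∘ φ
  have hVφ : ∀ t, HasDerivAt (fun s => V (φ s))
      ((inner ℝ (gradient V (φ t)) (f (φ t)) : ℝ)) t := by
    intro t
    have h1 : HasGradientAt V (gradient V (φ t)) (φ t) :=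
      (hV.differentiable one_ne_zero (φ t)).hasGradientAt
    have h2 : HasDerivAt (fun s => V (φ s)) _ t := (hasGradientAt_iff_hasFDerivAt.mp h1).comp_hasDerivAt t (hφ t)
    simpa [toDual_apply_apply] using h2
  -- derivative of ρ ∘ φ
  have hρφ : ∀ t, HasDerivAt (fun s => ρ (φ s))
      ((inner ℝ (gradient ρ (φ t)) (f (φ t)) : ℝ)) t := by
    intro t
    have h1 : HasGradientAt ρ (gradient ρ (φ t)) (φ t) :=
      (hρ.differentiable one_ne_zero (φ t)).hasGradientAt
    have h2 : HasDerivAt (fun s => ρ (φ s)) _ t := (hasGradientAt_iff_hasFDerivAt.mp h1).comp_hasDerivAt t (hφ t)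
    simpa [toDual_apply_apply] using h2
  -- right-openness of the invariant condition
  have open_right : ∀ t : ℝ, φ t ∈ Ω → V (φ t) ≤ c₂ →
      ∀ᶠ s in 𝓝[>] t, φ s ∈ Ω ∧ V (φ s) ≤ c₂ := by
    intro t hΩt hVt
    have hA : ∀ᶠ s in 𝓝[>] t, φ s ∈ Ω := by
      by_cases hint : φ t ∈ interior Ω
      · have h1 : ∀ᶠ s in 𝓝 t, φ s ∈ interior Ω :=
          hφc.continuousAt.preimage_mem_nhds (isOpen_interior.mem_nhds hint)
        exact nhdsWithin_le_nhds (h1.mono fun s hs => interior_subset hs)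
      · have hfr : φ t ∈ frontier Ω := by
          rw [frontier, hΩclosed.closure_eq]
          exact ⟨hΩt, hint⟩
        have hρ0 : ρ (φ t) = 0 := by
          have := hbdry ▸ hfr
          exact this
        have h1 := hin _ hfr hVt
        have hg := hgradρ _ hfr
        rw [hnrm _ hfr, real_inner_smul_right] at h1
        have hpos : 0 < ‖gradient ρ (φ t)‖⁻¹ :=
          inv_pos.mpr (norm_pos_iff.mpr hg)
        have h3 : (inner ℝ (f (φ t)) (gradient ρ (φ t)) : ℝ) < 0 := by
          nlinarith
        have h2 : (inner ℝ (gradient ρ (φ t)) (f (φ t)) : ℝ) < 0 := by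
          rwa [real_inner_comm]
        have hev := eventually_lt_right_of_hasDerivAt_neg (hρφ t) h2
        filter_upwards [hev] with s hs
        rw [hΩρ]
        have : ρ (φ s) < 0 := by rw [← hρ0]; exact hs
        exact le_of_lt this
    have hB : ∀ᶠ s in 𝓝[>] t, V (φ s) ≤ c₂ := by
      rcases lt_or_eq_of_le hVt with h | h
      · have hc : ContinuousAt (fun s => V (φ s)) t :=
          (hV.continuous.comp hφc).continuousAt
        have h1 : ∀ᶠ s in 𝓝 t, V (φ s) < c₂ := hc.eventually_lt_const h
        exact nhdsWithin_le_nhds (h1.mono fun s hs => le_of_lt hs)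
      · have hband' : (inner ℝ (gradient V (φ t)) (f (φ t)) : ℝ) < 0 :=
          hband _ hΩt (by rw [h]; exact le_of_lt hc₁₂) hVt
        have hev := eventually_lt_right_of_hasDerivAt_neg (hVφ t) hband'
        filter_upwards [hev] with s hs
        exact le_of_lt (hs.trans_le hVt)
    exact hA.and hB
  -- forward invariance
  have key : ∀ T : ℝ, 0 ≤ T → φ T ∈ Ω ∧ V (φ T) ≤ c₂ := by
    intro T hT
    set S : Set ℝ := {t | t ∈ Icc 0 T ∧ ∀ s ∈ Icc 0 t, φ s ∈ Ω ∧ V (φ s) ≤ c₂} with hSdef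
    have hS0 : (0:ℝ) ∈ S := by
      refine ⟨⟨le_refl 0, hT⟩, fun s hs => ?_⟩
      have : s = 0 := le_antisymm hs.2 hs.1
      rw [this]; exact ⟨hφ0Ω, hφ0V⟩
    have hbdd : BddAbove S := ⟨T, fun t ht => ht.1.2⟩
    set u := sSup S with hu
    have hu0 : 0 ≤ u := le_csSup hbdd hS0
    have huT : u ≤ T := csSup_le ⟨0, hS0⟩ fun t ht => ht.1.2
    have hC : IsClosed {s : ℝ | φ s ∈ Ω ∧ V (φ s) ≤ c₂} :=
      (hΩclosed.preimage hφc).inter (isClosed_Iic.preimage (hV.continuous.comp hφc))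
    have huS : u ∈ S := by
      refine ⟨⟨hu0, huT⟩, fun s hs => ?_⟩
      rcases lt_or_eq_of_le hs.2 with h | h
      · obtain ⟨t, htS, hst⟩ := exists_lt_of_lt_csSup ⟨0, hS0⟩ h
        exact htS.2 s ⟨hs.1, le_of_lt hst⟩
      · rcases eq_or_lt_of_le hu0 with h0 | h0
        · rw [h, ← h0]; exact ⟨hφ0Ω, hφ0V⟩
        · have hsub : Ico 0 u ⊆ {s : ℝ | φ s ∈ Ω ∧ V (φ s) ≤ c₂} := by
            intro r hr
            obtain ⟨t, htS, hrt⟩ := exists_lt_of_lt_csSup ⟨0, hS0⟩ hr.2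
            exact htS.2 r ⟨hr.1, le_of_lt hrt⟩
          have hsub2 : Icc 0 u ⊆ {s : ℝ | φ s ∈ Ω ∧ V (φ s) ≤ c₂} := by
            rw [← closure_Ico (ne_of_lt h0)]
            exact closure_minimal hsub hC
          exact hsub2 (by rw [h]; exact ⟨hu0, le_refl u⟩)
    have huTeq : u = T := by
      by_contra hne
      have hlt : u < T := lt_of_le_of_ne huT hne
      have huΩ := (huS.2 u ⟨hu0, le_refl u⟩).1
      have huV := (huS.2 u ⟨hu0, le_refl u⟩).2
      have hev := open_right u huΩ huV
      obtain ⟨b, hb, hsub⟩ := mem_nhdsGT_iff_exists_Ioo_subset.mp hev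
      have hub : u < b := hb
      set t' := min ((u + b) / 2) T with ht'def
      have ht'1 : u < t' := lt_min (by linarith) hlt
      have ht'2 : t' < b := lt_of_le_of_lt (min_le_left _ _) (by linarith)
      have ht'S : t' ∈ S := by
        refine ⟨⟨le_trans hu0 (le_of_lt ht'1), min_le_right _ _⟩, fun s hs => ?_⟩
        rcases le_or_gt s u with h | h
        · exact huS.2 s ⟨hs.1, h⟩
        · exact hsub ⟨h, lt_of_le_of_lt hs.2 ht'2⟩
      exact absurd (le_csSup hbdd ht'S) (not_le.mpr ht'1)
    rw [huTeq] at huS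
    exact huS.2 T ⟨hT, le_refl T⟩
  -- now the finite-time entry, by contradiction
  by_contra hcon
  push_neg at hcon
  -- hcon : ∀ T ≥ 0, c₁ < V (φ T)
  set K : Set (EuclideanSpace ℝ (Fin n)) := Ω ∩ V ⁻¹' (Icc c₁ c₂) with hKdef
  have hKc : IsCompact K := hΩc.inter_right (isClosed_Icc.preimage hV.continuous)
  have hKne : K.Nonempty := ⟨φ 0, hφ0Ω, ⟨le_of_lt (hcon 0 le_rfl), hφ0V⟩⟩
  set F : EuclideanSpace ℝ (Fin n) → ℝ := fun x => (inner ℝ (gradient V x) (f x) : ℝ)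
    with hFdef
  have hgradc : Continuous (fun x => gradient V x) := by
    have h1 : Continuous (fun x => fderiv ℝ V x) := hV.continuous_fderiv one_ne_zero
    exact (toDual ℝ (EuclideanSpace ℝ (Fin n))).symm.continuous.comp h1
  have hFc : Continuous F := hgradc.inner hfc
  obtain ⟨x₀, hx₀K, hx₀max⟩ := hKc.exists_isMaxOn hKne hFc.continuousOn
  set δ : ℝ := -F x₀ with hδdef
  have hδ : 0 < δ := neg_pos.mpr (hband x₀ hx₀K.1 hx₀K.2.1 hx₀K.2.2)
  have hFle : ∀ x ∈ K, F x ≤ -δ := by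
    intro x hx
    have := hx₀max hx
    simpa [hδdef] using this
  -- h t = V (φ t) + δ t is antitone on [0, ∞)
  set h : ℝ → ℝ := fun t => V (φ t) + δ * t with hhdef
  have hh : ∀ t, HasDerivAt h (F (φ t) + δ) t := by
    intro t
    have h1 : HasDerivAt (fun s : ℝ => δ * s) δ t := by
      simpa using (hasDerivAt_id t).const_mul δ
    exact (hVφ t).add h1
  have hanti : AntitoneOn h (Ici 0) := by
    apply antitoneOn_of_deriv_nonpos (convex_Ici 0)
    · exact ((hV.continuous.comp hφc).add (continuous_const.mul continuous_id)).continuousOn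
    · intro t ht
      exact (hh t).differentiableAt.differentiableWithinAt
    · intro t ht
      rw [interior_Ici] at ht
      have ht0 : (0:ℝ) ≤ t := le_of_lt ht
      have hKt : φ t ∈ K := ⟨(key t ht0).1, ⟨le_of_lt (hcon t ht0), (key t ht0).2⟩⟩
      rw [(hh t).deriv]
      have := hFle _ hKt
      linarith
  set T : ℝ := (c₂ - c₁) / δ + 1 with hTdef
  have hT0 : (0:ℝ) ≤ T := by
    have : (0:ℝ) ≤ (c₂ - c₁) / δ := div_nonneg (by linarith) hδ.le
    simp only [hTdef]; linarith
  have hineq : h T ≤ h 0 := hanti (mem_Ici.mpr le_rfl) (mem_Ici.mpr hT0) hT0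
  have hδT : δ * T = c₂ - c₁ + δ := by
    rw [hTdef, mul_add, mul_one, mul_div_assoc', mul_div_right_comm, div_self hδ.ne', one_mul]
  have hVT : V (φ T) ≤ c₁ - δ := by
    have h0 : h 0 = V (φ 0) := by simp [hhdef]
    have hTv : h T = V (φ T) + δ * T := rfl
    rw [h0, hTv, hδT] at hineq
    linarith
  have := hcon T hT0
  linarith
end

section
/- Let V : ℝⁿ → [0, ∞] and define W(x) = tanh(a·V(x)) for a > 0 with the convention W(x) = 1 when V(x) = ∞. Suppose V is differentiable at x with V(x) < ∞ and, along the flow of ẋ = f(x), ⟪∇V(x), f(x)⟫ = -‖x‖^p. Then W satisfies the Zubov-type PDE ⟪∇W(x), f(x)⟫ = -a(1 + W(x))(1 - W(x))‖x‖^p. -/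
lemma hasDerivAt_tanh (s : ℝ) :
    HasDerivAt Real.tanh (1 - Real.tanh s ^ 2) s := by
  have hc : Real.cosh s ≠ 0 := ne_of_gt (Real.cosh_pos s)
  have h : HasDerivAt (fun t => Real.sinh t / Real.cosh t)
      ((Real.cosh s * Real.cosh s - Real.sinh s * Real.sinh s) / Real.cosh s ^ 2) s :=
    (Real.hasDerivAt_sinh s).div (Real.hasDerivAt_cosh s) hc
  have heq : (Real.cosh s * Real.cosh s - Real.sinh s * Real.sinh s) / Real.cosh s ^ 2
      = 1 - Real.tanh s ^ 2 := by
    rw [Real.tanh_eq_sinh_div_cosh]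
    field_simp
  have : (fun t => Real.sinh t / Real.cosh t) = Real.tanh := by
    funext t; rw [Real.tanh_eq_sinh_div_cosh]
  rw [this, heq] at h
  exact h

/-- Concrete Zubov PDE (Theorem 2.4): if `V` is differentiable at `x` (with finite value)
and `⟪∇V(x), f(x)⟫ = -‖x‖^p`, then `W = tanh (a·V)` satisfies
`⟪∇W(x), f(x)⟫ = -a (1 + W x)(1 - W x) ‖x‖^p`. -/
theorem stmt_6 {n : ℕ} (f : EuclideanSpace ℝ (Fin n) → EuclideanSpace ℝ (Fin n))
    (V : EuclideanSpace ℝ (Fin n) → ℝ) (a p : ℝ) (ha : 0 < a)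
    (W : EuclideanSpace ℝ (Fin n) → ℝ) (hWdef : ∀ y, W y = Real.tanh (a * V y))
    (x : EuclideanSpace ℝ (Fin n))
    (hVdiff : DifferentiableAt ℝ V x)
    (hVpde : (inner ℝ (gradient V x) (f x) : ℝ) = -‖x‖ ^ p) :
    (inner ℝ (gradient W x) (f x) : ℝ) = -a * (1 + W x) * (1 - W x) * ‖x‖ ^ p := by
  set d : ℝ := 1 - Real.tanh (a * V x) ^ 2 with hd
  have hV : HasGradientAt V (gradient V x) x := hVdiff.hasGradientAt
  have haV : HasGradientAt (fun y => a * V y) (a • gradient V x) x := by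
    have := hV.hasFDerivAt.const_mul a
    rw [hasGradientAt_iff_hasFDerivAt]
    convert this using 1
    rotate_left
    ext v
    simp [InnerProductSpace.toDual_apply_apply, inner_smul_left, mul_comm]
    rfl
  have htanh : HasDerivAt Real.tanh d (a * V x) := hasDerivAt_tanh _
  have hW : HasGradientAt W ((d * a) • gradient V x) x := by
    have hcomp := htanh.comp_hasFDerivAt x haV.hasFDerivAt
    have hWf : W = Real.tanh ∘ (fun y => a * V y) := by funext y; simp [hWdef y]
    rw [hasGradientAt_iff_hasFDerivAt]
    rw [hWf]
    convert hcomp using 1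
    rotate_left
    ext v
    simp [InnerProductSpace.toDual_apply_apply, inner_smul_left, real_inner_smul_left]
    ring
    rfl
  have hgrad : gradient W x = (d * a) • gradient V x := hW.gradient
  rw [hgrad, real_inner_smul_left, hVpde, hWdef x]
  ring
end

section
/- Let f : ℝⁿ → ℝⁿ be locally Lipschitz. Let A ⊆ ℝⁿ be open, bounded, containing 0, and suppose W : A → ℝ is C¹ with: W(0) = 0; 0 < W(x) < 1 for x ∈ A \ {0}; W(x) → 1 as x → ∂A; and ⟪∇W(x), f(x)⟫ = -Ψ(x)(1 - W(x)) on A for some continuous positive definite Ψ (Ψ(0) = 0 and Ψ(x) > 0 for x ≠ 0). Then for every x₀ ∈ A, the solution φ(t, x₀) stays in A for all t ≥ 0, i.e., A is forward invariant. -/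
open Filter Set Topology

/-- Forward-invariance component of the Zubov theorem: if `W` is C¹ on the open bounded
neighborhood `A` of `0`, with `W 0 = 0`, `0 < W < 1` on `A \ {0}`, `W → 1` at `∂A`, and
`⟪∇W, f⟫ = -Ψ(1 - W)` on `A` for a continuous positive definite `Ψ`, then every solution
of `ẋ = f(x)` starting in `A` stays in `A` for all `t ≥ 0`. -/
theorem stmt_15 {n : ℕ} (f : EuclideanSpace ℝ (Fin n) → EuclideanSpace ℝ (Fin n))
    (hf : LocallyLipschitz f)
    (A : Set (EuclideanSpace ℝ (Fin n))) (hAopen : IsOpen A)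
    (hAbdd : Bornology.IsBounded A) (h0A : (0 : EuclideanSpace ℝ (Fin n)) ∈ A)
    (W : EuclideanSpace ℝ (Fin n) → ℝ) (hW : ContDiffOn ℝ 1 W A)
    (hW0 : W 0 = 0)
    (hWpos : ∀ x ∈ A, x ≠ 0 → 0 < W x ∧ W x < 1)
    (hWbdry : ∀ y ∈ frontier A, Filter.Tendsto W (nhdsWithin y A) (nhds 1))
    (Ψ : EuclideanSpace ℝ (Fin n) → ℝ) (hΨcont : Continuous Ψ)
    (hΨ0 : Ψ 0 = 0) (hΨpos : ∀ x, x ≠ 0 → 0 < Ψ x)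
    (hpde : ∀ x ∈ A, (inner ℝ (gradient W x) (f x) : ℝ) = -Ψ x * (1 - W x)) :
    ∀ φ : ℝ → EuclideanSpace ℝ (Fin n), (∀ t, HasDerivAt φ (f (φ t)) t) →
      φ 0 ∈ A → ∀ t ≥ (0:ℝ), φ t ∈ A := by
  intro φ hφ hφ0 t ht
  by_contra hout
  have hφcont : Continuous φ :=
    continuous_iff_continuousAt.mpr fun s => (hφ s).continuousAt
  -- W < 1 on A
  have hWlt1 : ∀ x ∈ A, W x < 1 := by
    intro x hx
    rcases eq_or_ne x 0 with rfl | hx0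
    · rw [hW0]; norm_num
    · exact (hWpos x hx hx0).2
  have hΨnn : ∀ x, 0 ≤ Ψ x := by
    intro x
    rcases eq_or_ne x 0 with rfl | hx0
    · rw [hΨ0]
    · exact (hΨpos x hx0).le
  -- first exit time
  set S : Set ℝ := {s | s ∈ Icc 0 t ∧ φ s ∉ A} with hSdef
  have hSclosed : IsClosed S := by
    have : S = Icc 0 t ∩ φ ⁻¹' Aᶜ := by ext s; simp [hSdef, mem_Icc, And.comm]
    rw [this]
    exact isClosed_Icc.inter (hAopen.isClosed_compl.preimage hφcont)
  have hSne : S.Nonempty := ⟨t, ⟨ht, le_refl t⟩, hout⟩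
  have hSbdd : BddBelow S := ⟨0, fun s hs => hs.1.1⟩
  set T : ℝ := sInf S with hTdef
  have hTmem : T ∈ S := hSclosed.csInf_mem hSne hSbdd
  have hT0 : 0 ≤ T := hTmem.1.1
  have hTnotA : φ T ∉ A := hTmem.2
  have hTpos : 0 < T := by
    rcases hT0.lt_or_eq with h | h
    · exact h
    · exact absurd hφ0 (h ▸ hTnotA)
  have hTt : T ≤ t := hTmem.1.2
  -- before T, trajectory stays in A
  have hinA : ∀ s ∈ Ico 0 T, φ s ∈ A := by
    intro s hs
    by_contra hsA
    exact absurd (csInf_le hSbdd ⟨⟨hs.1, hs.2.le.trans hTt⟩, hsA⟩) (not_le.mpr hs.2)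
  -- derivative of W ∘ φ at points where φ s ∈ A
  have hderiv : ∀ s, φ s ∈ A →
      HasDerivAt (W ∘ φ) (-Ψ (φ s) * (1 - W (φ s))) s := by
    intro s hs
    have hWd : DifferentiableAt ℝ W (φ s) :=
      (hW.contDiffAt (hAopen.mem_nhds hs)).differentiableAt one_ne_zero
    have hg := hWd.hasGradientAt.hasFDerivAt
    have := hg.comp_hasDerivAt s (hφ s)
    have heq : ((InnerProductSpace.toDual ℝ _) (gradient W (φ s))) (f (φ s))
        = -Ψ (φ s) * (1 - W (φ s)) := by
      rw [InnerProductSpace.toDual_apply_apply]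
      exact hpde (φ s) hs
    rwa [heq] at this
  -- W ∘ φ nonincreasing on [0, T)
  have hmono : ∀ s ∈ Ico 0 T, W (φ s) ≤ W (φ 0) := by
    intro s hs
    have hsub : Icc (0:ℝ) s ⊆ Ico 0 T := fun u hu => ⟨hu.1, lt_of_le_of_lt hu.2 hs.2⟩
    have hanti : AntitoneOn (W ∘ φ) (Icc 0 s) := by
      apply antitoneOn_of_deriv_nonpos (convex_Icc 0 s)
      · intro u hu
        exact (hderiv u (hinA u (hsub hu))).continuousAt.continuousWithinAt
      · intro u hu
        rw [interior_Icc] at hu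
        exact (hderiv u (hinA u (hsub (Ioo_subset_Icc_self hu)))).differentiableAt.differentiableWithinAt
      · intro u hu
        rw [interior_Icc] at hu
        have hA : φ u ∈ A := hinA u (hsub (Ioo_subset_Icc_self hu))
        rw [(hderiv u hA).deriv]
        have h1 : 0 ≤ 1 - W (φ u) := by linarith [hWlt1 _ hA]
        have := hΨnn (φ u)
        nlinarith
    exact hanti ⟨le_refl 0, hs.1⟩ ⟨hs.1, le_refl s⟩ hs.1
  -- φ T is on the boundary of A
  have hIconeBot : (nhdsWithin T (Ico 0 T)).NeBot := by
    rw [← mem_closure_iff_nhdsWithin_neBot, closure_Ico hTpos.ne]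
    exact ⟨hT0, le_refl T⟩
  have hφT : Tendsto φ (nhdsWithin T (Ico 0 T)) (nhdsWithin (φ T) A) := by
    rw [tendsto_nhdsWithin_iff]
    exact ⟨(hφcont.tendsto T).mono_left nhdsWithin_le_nhds,
      eventually_nhdsWithin_of_forall hinA⟩
  have hfrontier : φ T ∈ frontier A := by
    have hclos : φ T ∈ closure A :=
      mem_closure_of_tendsto (tendsto_nhdsWithin_iff.mp hφT).1
        (eventually_nhdsWithin_of_forall hinA)
    rw [frontier, hAopen.interior_eq]
    exact ⟨hclos, hTnotA⟩
  have hlim : Tendsto (W ∘ φ) (nhdsWithin T (Ico 0 T)) (nhds 1) :=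
    (hWbdry (φ T) hfrontier).comp hφT
  -- contradiction: W ∘ φ ≤ W (φ 0) < 1 but → 1
  have hc : W (φ 0) < 1 := hWlt1 _ hφ0
  have hev : ∀ᶠ s in nhdsWithin T (Ico 0 T), W (φ 0) < W (φ s) :=
    hlim.eventually (eventually_gt_nhds hc)
  have hev2 : ∀ᶠ s in nhdsWithin T (Ico 0 T), s ∈ Ico 0 T :=
    eventually_mem_nhdsWithin
  rcases (hev.and hev2).exists with ⟨s, hlt, hsmem⟩
  exact absurd (hmono s hsmem) (not_le.mpr hlt)
end
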